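/- Fundamental Theorem of GSTE: for a closure function F, valuation φ, and assertion graph G = (V, E, ant, cons), the defining sequence graph of the consequent is below the defining trajectory graph of the antecedent ([cons]_φ ≤ [ant]^F_φ for all φ) if and only if every trajectory graph of F satisfying ant also satisfies cons (for all φ), where satisfaction of a formula function f by Σ is defined as [f]_φ ≤ Σ edge-wise. -/

import Mathlib

inductive V : Type
  | zero | one | X | T
deriving DecidableEq

instance instFintypeV : Fintype V :=
  Fintype.ofList [V.zero, V.one, V.X, V.T] (fun x => by cases x <;> simp)

def vleB : V → V → Bool := fun a b =>
  a = b || a = V.X || b = V.T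

def vlub : V → V → V
  | V.X, b => b
  | a, V.X => a
  | a, b => if a = b then a else V.T

def vglb : V → V → V
  | V.T, b => b
  | a, V.T => a
  | a, b => if a = b then a else V.X

instance : LE V := ⟨fun a b => vleB a b = true⟩
instance : DecidableRel (α := V) (· ≤ ·) := fun a b => inferInstanceAs (Decidable (vleB a b = true))

instance : Lattice V where
  le := (· ≤ ·)
  le_refl := by decide
  le_trans := by decide
  le_antisymm := by decide
  sup := vlub
  le_sup_left := by decide
  le_sup_right := by decide
  sup_le := by decide
  inf := vglb
  inf_le_left := by decide
  inf_le_right := by decide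
  le_inf := by decide

instance : BoundedOrder V where
  top := V.T
  le_top := by decide
  bot := V.X
  bot_le := by decide

def vand : V → V → V
  | V.T, _ => V.T
  | _, V.T => V.T
  | V.zero, _ => V.zero
  | _, V.zero => V.zero
  | V.one, V.one => V.one
  | _, _ => V.X

def vor : V → V → V
  | V.T, _ => V.T
  | _, V.T => V.T
  | V.one, _ => V.one
  | _, V.one => V.one
  | V.zero, V.zero => V.zero
  | _, _ => V.X

def vnot : V → V
  | V.zero => V.one
  | V.one => V.zero
  | V.X => V.X
  | V.T => V.T


/-- Formulas of next-time-free trajectory evaluation logic (GTEL) over circuit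
nodes `Node` and symbolic constants `W`:
`f ::= n is 0 | n is 1 | f₁ and f₂ | P → f`. -/
inductive GTEL (Node W : Type) : Type
  | isb (n : Node) (b : Bool)
  | conj (f g : GTEL Node W)
  | guard (P : (W → Bool) → Bool) (f : GTEL Node W)

/-- The lattice value corresponding to a Boolean. -/
def boolV (b : Bool) : V := if b then V.one else V.zero

/-- Satisfaction of a GTEL formula by a circuit state `s` under a valuation `φ`
of the symbolic constants. -/
def satG {Node W : Type} (φ : W → Bool) (s : Node → V) : GTEL Node W → Prop
  | .isb n b => s n = boolV b
  | .conj f g => satG φ s f ∧ satG φ s g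
  | .guard P f => P φ = true → satG φ s f

/-- The defining (weakest) state of a GTEL formula under a valuation `φ`. -/
def defState {Node W : Type} [DecidableEq Node] (φ : W → Bool) :
    GTEL Node W → Node → V
  | .isb n b => fun m => if m = n then boolV b else V.X
  | .conj f g => defState φ f ⊔ defState φ g
  | .guard P f => if P φ then defState φ f else fun _ => V.X

/-- The defining sequence graph of an antecedent/consequent function under a
valuation `φ`. -/
def defSG {Node W E : Type} [DecidableEq Node] (φ : W → Bool)
    (ant : E → GTEL Node W) : E → Node → V :=
  fun e => defState φ (ant e)

/-- Fundamental Theorem of GSTE: the defining sequence graph of the consequent lies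
below the defining trajectory graph of the antecedent (for all valuations φ) iff
every trajectory graph satisfying the antecedent satisfies the consequent (for all
φ), where satisfaction of a formula function `f` by `Σ` is `[f]_φ ≤ Σ` edge-wise. -/
theorem fundamental_theorem_of_GSTE {Node W E : Type} [DecidableEq Node]
    (Fsg : (E → Node → V) → (E → Node → V))
    (hmono : ∀ S1 S2 : E → Node → V, S1 ≤ S2 → Fsg S1 ≤ Fsg S2)
    (hidem : ∀ Sg : E → Node → V, Fsg (Fsg Sg) = Fsg Sg)
    (hext : ∀ Sg : E → Node → V, Sg ≤ Fsg Sg)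
    (ant cons : E → GTEL Node W) :
    (∀ φ : W → Bool, defSG φ cons ≤ Fsg (defSG φ ant)) ↔
      (∀ (φ : W → Bool) (Sg : E → Node → V), Fsg Sg = Sg →
        defSG φ ant ≤ Sg → defSG φ cons ≤ Sg) := by
  constructor
  · intro h φ Sg hfix hant
    exact le_trans (h φ) (by rw [← hfix]; exact hmono _ _ hant)
  · intro h φ
    exact h φ (Fsg (defSG φ ant)) (hidem _) (hext _)
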